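/- Let p_1 and p_2 be distinct primes and s a nonnegative integer. Then, as an identity of complex numbers, W(s, (p_1, p_2)) = (1/(p_1 p_2)) (s + (p_1 + p_2)/2) + (1/p_1) ∑_{ρ} ρ^{−s}/(1 − ρ^{p_2}) + (1/p_2) ∑_{σ} σ^{−s}/(1 − σ^{p_1}), where the first sum runs over all p_1-th roots of unity ρ ≠ 1 and the second sum runs over all p_2-th roots of unity σ ≠ 1. -/

import Mathlib

open Polynomial Finset

/-! ### Auxiliary lemmas -/

private lemma inv_sum_one' (w : ℂ) (h0 : w ≠ 0) (h1 : w ≠ 1) :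
    1/(1-w) + 1/(1-w⁻¹) = 1 := by
  have ha : 1 - w ≠ 0 := sub_ne_zero_of_ne (Ne.symm h1)
  have hb : w - 1 ≠ 0 := sub_ne_zero_of_ne h1
  have hc : 1 - w⁻¹ = (w - 1) / w := by field_simp
  rw [hc, one_div_div, div_add_div _ _ ha hb]
  rw [div_eq_one_iff_eq (mul_ne_zero ha hb)]
  ring

private lemma mem_facts' {p q : ℕ} (hp : p.Prime) (hq : q.Prime) (hne : p ≠ q) {ρ : ℂ}
    (hρ : ρ ∈ (nthRootsFinset p (1 : ℂ)).erase 1) :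
    ρ ^ p = 1 ∧ ρ ≠ 1 ∧ ρ ≠ 0 ∧ ρ ^ q ≠ 1 := by
  obtain ⟨hρ1, hρm⟩ := Finset.mem_erase.mp hρ
  have hpow : ρ ^ p = 1 := (mem_nthRootsFinset hp.pos 1).mp hρm
  have hρ0 : ρ ≠ 0 := ne_zero_of_mem_nthRootsFinset one_ne_zero hρm
  refine ⟨hpow, hρ1, hρ0, fun hq1 => ?_⟩
  have h1 : orderOf ρ ∣ p := orderOf_dvd_of_pow_eq_one hpow
  have h2 : orderOf ρ ∣ q := orderOf_dvd_of_pow_eq_one hq1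
  have h3 : orderOf ρ = p := by
    rcases (Nat.dvd_prime hp).mp h1 with h | h
    · exact absurd (orderOf_eq_one_iff.mp h) hρ1
    · exact h
  exact hne ((Nat.prime_dvd_prime_iff_eq hp hq).mp (h3 ▸ h2))

private lemma nthRF_image' (p : ℕ) (hp : 0 < p) {ζ : ℂ} (hζ : IsPrimitiveRoot ζ p) :
    nthRootsFinset p (1 : ℂ) = (Finset.range p).image (ζ ^ ·) := by
  symm
  apply Finset.eq_of_subset_of_card_le
  · intro x hx
    simp only [Finset.mem_image, Finset.mem_range] at hx
    obtain ⟨i, _, rfl⟩ := hx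
    rw [mem_nthRootsFinset hp, ← pow_mul, mul_comm, pow_mul, hζ.pow_eq_one, one_pow]
  · rw [hζ.card_nthRootsFinset, Finset.card_image_of_injOn, Finset.card_range]
    intro i hi j hj h
    exact hζ.pow_inj (Finset.mem_range.mp hi) (Finset.mem_range.mp hj) h

private lemma sum_zpow_nthRF' (p : ℕ) (hp : 0 < p) (t : ℤ) :
    ∑ ρ ∈ nthRootsFinset p (1 : ℂ), ρ ^ t = if (p : ℤ) ∣ t then (p : ℂ) else 0 := by
  obtain ⟨ζ, hζ⟩ : ∃ ζ : ℂ, IsPrimitiveRoot ζ p :=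
    ⟨_, Complex.isPrimitiveRoot_exp p hp.ne'⟩
  have hζ0 : ζ ≠ 0 := hζ.ne_zero hp.ne'
  rw [nthRF_image' p hp hζ, Finset.sum_image (fun i hi j hj h =>
    hζ.pow_inj (Finset.mem_range.mp hi) (Finset.mem_range.mp hj) h)]
  have key : ∀ i : ℕ, (ζ ^ i : ℂ) ^ t = (ζ ^ t) ^ i := by
    intro i
    rw [← zpow_natCast ζ i, ← zpow_mul, mul_comm, zpow_mul, zpow_natCast]
  simp_rw [key]
  by_cases hd : (p : ℤ) ∣ t
  · rw [if_pos hd, (hζ.zpow_eq_one_iff_dvd t).mpr hd]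
    simp
  · rw [if_neg hd]
    have hne : ζ ^ t ≠ 1 := fun h => hd ((hζ.zpow_eq_one_iff_dvd t).mp h)
    rw [geom_sum_eq hne, ← zpow_natCast (ζ ^ t) p, ← zpow_mul, mul_comm, zpow_mul,
      zpow_natCast, hζ.pow_eq_one, one_zpow, sub_self, zero_div]

/-- `Faux p q t = ∑_{ρ^p = 1, ρ ≠ 1} ρ^t / (1 - ρ^q)`. -/
private noncomputable def Faux (p q : ℕ) (t : ℤ) : ℂ :=
  ∑ ρ ∈ (nthRootsFinset p (1 : ℂ)).erase 1, ρ ^ t / (1 - ρ ^ q)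

private lemma Faux_zero {p q : ℕ} (hp : p.Prime) (hq : q.Prime) (hne : p ≠ q) :
    Faux p q 0 = ((p : ℂ) - 1) / 2 := by
  have h2 : (2 : ℂ) * Faux p q 0 = (p : ℂ) - 1 := by
    have hinv : ∀ ρ ∈ (nthRootsFinset p (1 : ℂ)).erase 1, ρ⁻¹ ∈ (nthRootsFinset p (1 : ℂ)).erase 1 := by
      intro ρ hρ
      obtain ⟨hpow, hρ1, hρ0, -⟩ := mem_facts' hp hq hne hρ
      refine Finset.mem_erase.mpr ⟨fun h => hρ1 (by rw [← inv_inv ρ, h, inv_one]), ?_⟩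
      exact (mem_nthRootsFinset hp.pos 1).mpr (by rw [inv_pow, hpow, inv_one])
    have hsum : Faux p q 0 = ∑ ρ ∈ (nthRootsFinset p (1 : ℂ)).erase 1, 1 / (1 - (ρ⁻¹) ^ q) := by
      unfold Faux
      simp_rw [zpow_zero]
      exact Finset.sum_nbij' (fun ρ => ρ⁻¹) (fun ρ => ρ⁻¹) hinv hinv
        (fun ρ _ => inv_inv ρ) (fun ρ _ => inv_inv ρ) (fun ρ hρ => by rw [inv_inv])
    have key : ∀ ρ ∈ (nthRootsFinset p (1 : ℂ)).erase 1,
        ρ ^ (0:ℤ) / (1 - ρ ^ q) + 1 / (1 - (ρ⁻¹) ^ q) = 1 := by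
      intro ρ hρ
      obtain ⟨hpow, hρ1, hρ0, hq1⟩ := mem_facts' hp hq hne hρ
      rw [zpow_zero, inv_pow]
      exact inv_sum_one' (ρ ^ q) (pow_ne_zero _ hρ0) hq1
    calc (2:ℂ) * Faux p q 0 = Faux p q 0 + Faux p q 0 := two_mul _
      _ = ∑ ρ ∈ (nthRootsFinset p (1 : ℂ)).erase 1,
            (ρ ^ (0:ℤ) / (1 - ρ ^ q) + 1 / (1 - (ρ⁻¹) ^ q)) := by
          nth_rewrite 2 [hsum]
          rw [Faux, ← Finset.sum_add_distrib]
      _ = ∑ ρ ∈ (nthRootsFinset p (1 : ℂ)).erase 1, (1:ℂ) := Finset.sum_congr rfl key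
      _ = (p : ℂ) - 1 := by
          rw [Finset.sum_const, Finset.card_erase_of_mem (one_mem_nthRootsFinset hp.pos),
            (Complex.isPrimitiveRoot_exp p hp.pos.ne').card_nthRootsFinset]
          have h1 : 1 ≤ p := hp.pos
          simp only [nsmul_eq_mul, mul_one]
          push_cast [Nat.cast_sub h1]
          ring
  linear_combination h2 / 2

private lemma sum_zpow_erase' {p : ℕ} (hp : p.Prime) (t : ℤ) :
    ∑ ρ ∈ (nthRootsFinset p (1 : ℂ)).erase 1, ρ ^ t
      = (if (p : ℤ) ∣ t then (p : ℂ) else 0) - 1 := by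
  have h := Finset.add_sum_erase (nthRootsFinset p (1 : ℂ)) (fun ρ => ρ ^ t)
    (one_mem_nthRootsFinset hp.pos)
  simp only [one_zpow] at h
  rw [← sum_zpow_nthRF' p hp.pos t, ← h]
  ring

private lemma Faux_step {p q : ℕ} (hp : p.Prime) (hq : q.Prime) (hne : p ≠ q) (t : ℤ) :
    Faux p q (t + q) = Faux p q t - ((if (p : ℤ) ∣ t then (p : ℂ) else 0) - 1) := by
  rw [← sum_zpow_erase' hp t]
  unfold Faux
  rw [← Finset.sum_sub_distrib]
  apply Finset.sum_congr rfl
  intro ρ hρ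
  obtain ⟨hpow, hρ1, hρ0, hq1⟩ := mem_facts' hp hq hne hρ
  have h1 : (1 : ℂ) - ρ ^ q ≠ 0 := sub_ne_zero_of_ne (Ne.symm hq1)
  rw [zpow_add₀ hρ0, zpow_natCast ρ q]
  field_simp
  ring

private lemma Faux_per {p q : ℕ} (hp : p.Prime) (hq : q.Prime) (hne : p ≠ q) (t m : ℤ) :
    Faux p q (t + p * m) = Faux p q t := by
  unfold Faux
  apply Finset.sum_congr rfl
  intro ρ hρ
  obtain ⟨hpow, hρ1, hρ0, hq1⟩ := mem_facts' hp hq hne hρ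
  rw [zpow_add₀ hρ0, zpow_mul, zpow_natCast, hpow, one_zpow, mul_one]

private lemma Faux_val {p q : ℕ} (hp : p.Prime) (hq : q.Prime) (hne : p ≠ q) :
    ∀ k : ℕ, 1 ≤ k → k ≤ p → Faux p q ((k : ℤ) * q) = (k : ℂ) - ((p : ℂ) + 1) / 2 := by
  intro k
  induction k with
  | zero => omega
  | succ n ih =>
    intro h1 h2
    rcases Nat.eq_zero_or_pos n with hn | hn
    · subst hn
      have : ((1 : ℕ) : ℤ) * q = 0 + (q : ℤ) := by push_cast; ring
      rw [this, Faux_step hp hq hne 0, if_pos (dvd_zero _), Faux_zero hp hq hne]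
      push_cast
      ring
    · have hnp : n < p := by omega
      have hstep : ((n + 1 : ℕ) : ℤ) * q = (n : ℤ) * q + (q : ℤ) := by push_cast; ring
      rw [hstep, Faux_step hp hq hne, ih hn (by omega)]
      have hndvd : ¬ ((p : ℤ) ∣ (n : ℤ) * q) := by
        rw [← Nat.cast_mul, Int.natCast_dvd_natCast]
        intro hdvd
        rcases (Nat.Prime.dvd_mul hp).mp hdvd with h | h
        · exact absurd (Nat.le_of_dvd hn h) (by omega)
        · exact hne ((Nat.prime_dvd_prime_iff_eq hp hq).mp h)
      rw [if_neg hndvd]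
      push_cast
      ring

private lemma Faux_main {p q : ℕ} (hp : p.Prime) (hq : q.Prime) (hne : p ≠ q) (s U : ℕ)
    (hU1 : 1 ≤ U) (hUp : U ≤ p) (hdvd : p ∣ q * U + s) :
    Faux p q (-(s : ℤ)) = (U : ℂ) - ((p : ℂ) + 1) / 2 := by
  obtain ⟨m, hm⟩ := hdvd
  have key : -(s : ℤ) = (U : ℤ) * q + (p : ℤ) * (-(m : ℤ)) := by
    have : (q : ℤ) * U + s = p * m := by exact_mod_cast congrArg (Nat.cast : ℕ → ℤ) hm
    linarith
  rw [key, Faux_per hp hq hne, Faux_val hp hq hne U hU1 hUp]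

private lemma exists_U' (p q s : ℕ) (hp : p.Prime) (hq : q.Prime) (hne : p ≠ q) :
    ∃ U, 1 ≤ U ∧ U ≤ p ∧ p ∣ q * U + s := by
  haveI : Fact p.Prime := ⟨hp⟩
  haveI : NeZero p := ⟨hp.pos.ne'⟩
  have hqz : (q : ZMod p) ≠ 0 := by
    rw [Ne, ZMod.natCast_eq_zero_iff]
    intro hdvd
    exact hne ((Nat.prime_dvd_prime_iff_eq hp hq).mp hdvd)
  set u : ZMod p := -(s : ZMod p) * (q : ZMod p)⁻¹ with hu
  refine ⟨if u.val = 0 then p else u.val, ?_, ?_, ?_⟩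
  · split
    · exact hp.pos
    · omega
  · split
    · exact le_refl p
    · exact le_of_lt (ZMod.val_lt u)
  · rw [← ZMod.natCast_eq_zero_iff, Nat.cast_add, Nat.cast_mul]
    have hU : ((if u.val = 0 then p else u.val : ℕ) : ZMod p) = u := by
      by_cases h : u.val = 0
      · rw [if_pos h, ZMod.natCast_self]
        symm
        rwa [← ZMod.val_eq_zero]
      · rw [if_neg h, ZMod.natCast_val, ZMod.cast_id]
    rw [hU, hu]
    field_simp
    ring

/-- The restricted partition function `W s d`: the number of tuples
`(x_1, …, x_m)` of nonnegative integers with `x_1 d_1 + ⋯ + x_m d_m = s`. -/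
noncomputable def W (s : ℕ) (d : List ℕ) : ℕ :=
  Set.ncard {x : Fin d.length → ℕ | ∑ i, x i * d.get i = s}

private lemma W_two' (p q s : ℕ) :
    W s [p, q] = Set.ncard {x : Fin 2 → ℕ | x 0 * p + x 1 * q = s} := by
  unfold W
  apply congrArg
  ext x
  simp [Fin.sum_univ_two]

private lemma W_count' (p q U V M s : ℕ) (hp : 0 < p) (hq : 0 < q) (hpq : Nat.Coprime p q)
    (hU1 : 1 ≤ U) (hUp : U ≤ p) (hV1 : 1 ≤ V) (hVq : V ≤ q)
    (hUd : p ∣ q * U + s) (hVd : q ∣ p * V + s)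
    (hM : M * (p * q) = s + q * U + p * V) :
    W s [p, q] + 1 = M := by
  classical
  have hM1 : 1 ≤ M := by
    rcases Nat.eq_zero_or_pos M with h | h
    · exfalso
      subst h
      simp only [Nat.zero_mul] at hM
      have : 0 < p * V := Nat.mul_pos hp hV1
      omega
    · exact h
  set g : ℕ → (Fin 2 → ℕ) :=
    fun k => ![k * q + (q - V), (M - 2 - k) * p + (p - U)] with hg
  have heq : {x : Fin 2 → ℕ | x 0 * p + x 1 * q = s}
      = ↑((Finset.range (M - 1)).image g) := by
    ext x
    simp only [Set.mem_setOf_eq, Finset.coe_image, Set.mem_image, Finset.mem_coe,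
      Finset.mem_range]
    constructor
    · intro hx
      obtain ⟨c, hc⟩ : q ∣ V + x 0 := by
        have h2 : p * (V + x 0) + x 1 * q = p * V + s := by
          rw [mul_add, ← hx]; ring
        have h1 : q ∣ p * (V + x 0) := by
          rw [← h2] at hVd
          have h3 := Nat.dvd_sub hVd (dvd_mul_left q (x 1))
          rwa [Nat.add_sub_cancel] at h3
        exact (Nat.Coprime.dvd_of_dvd_mul_left hpq.symm h1)
      obtain ⟨d, hd⟩ : p ∣ U + x 1 := by
        have h2 : q * (U + x 1) + x 0 * p = q * U + s := by
          rw [mul_add, ← hx]; ring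
        have h1 : p ∣ q * (U + x 1) := by
          rw [← h2] at hUd
          have h3 := Nat.dvd_sub hUd (dvd_mul_left p (x 0))
          rwa [Nat.add_sub_cancel] at h3
        exact (Nat.Coprime.dvd_of_dvd_mul_left hpq h1)
      have hc1 : 1 ≤ c := by
        rcases Nat.eq_zero_or_pos c with h | h
        · subst h; simp at hc; omega
        · exact h
      have hd1 : 1 ≤ d := by
        rcases Nat.eq_zero_or_pos d with h | h
        · subst h; simp at hd; omega
        · exact h
      have hMcd : M = c + d := by
        apply Nat.eq_of_mul_eq_mul_right (Nat.mul_pos hp hq)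
        calc M * (p * q) = s + q * U + p * V := hM
          _ = p * (V + x 0) + q * (U + x 1) := by rw [← hx]; ring
          _ = p * (q * c) + q * (p * d) := by rw [hc, hd]
          _ = (c + d) * (p * q) := by ring
      refine ⟨c - 1, by omega, ?_⟩
      funext i
      fin_cases i
      · show (c - 1) * q + (q - V) = x 0
        have e1 : (c - 1) * q = c * q - 1 * q := Nat.sub_mul c 1 q
        have e2 : q * c = c * q := mul_comm q c
        have e3 : q ≤ q * c := Nat.le_mul_of_pos_right q hc1
        omega
      · show (M - 2 - (c - 1)) * p + (p - U) = x 1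
        have e0 : M - 2 - (c - 1) = d - 1 := by omega
        rw [e0]
        have e1 : (d - 1) * p = d * p - 1 * p := Nat.sub_mul d 1 p
        have e2 : p * d = d * p := mul_comm p d
        have e3 : p ≤ p * d := Nat.le_mul_of_pos_right p hd1
        omega
    · rintro ⟨k, hk, rfl⟩
      show (k * q + (q - V)) * p + ((M - 2 - k) * p + (p - U)) * q = s
      obtain ⟨a, ha⟩ : ∃ a, q = a + V := ⟨q - V, by omega⟩
      obtain ⟨b, hb⟩ : ∃ b, p = b + U := ⟨p - U, by omega⟩
      obtain ⟨j, hj⟩ : ∃ j, M = k + j + 2 := ⟨M - k - 2, by omega⟩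
      subst ha hb hj
      have e1 : a + V - V = a := by omega
      have e2 : b + U - U = b := by omega
      have e3 : k + j + 2 - 2 - k = j := by omega
      rw [e1, e2, e3]
      zify at hM ⊢
      linear_combination hM
  rw [W_two', heq, Set.ncard_coe_finset]
  have hcard : ((Finset.range (M - 1)).image g).card = M - 1 := by
    rw [Finset.card_image_of_injOn, Finset.card_range]
    intro k1 _ k2 _ hgk
    have h0 := congrFun hgk 0
    simp only [hg, Matrix.cons_val_zero] at h0
    have : k1 * q = k2 * q := by omega
    exact Nat.eq_of_mul_eq_mul_right hq this
  rw [hcard]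
  exact Nat.sub_add_cancel hM1

theorem restrictedPartition_two_primes_explicit
    (p₁ p₂ : ℕ) (hp₁ : p₁.Prime) (hp₂ : p₂.Prime) (hne : p₁ ≠ p₂) (s : ℕ) :
    (W s [p₁, p₂] : ℂ) =
      1 / ((p₁ : ℂ) * p₂) * ((s : ℂ) + ((p₁ : ℂ) + p₂) / 2) +
      (1 / (p₁ : ℂ)) *
        ∑ ρ ∈ (Polynomial.nthRootsFinset p₁ (1 : ℂ)).erase 1, ρ ^ (-(s : ℤ)) / (1 - ρ ^ p₂) +
      (1 / (p₂ : ℂ)) *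
        ∑ σ ∈ (Polynomial.nthRootsFinset p₂ (1 : ℂ)).erase 1, σ ^ (-(s : ℤ)) / (1 - σ ^ p₁) := by
  have hco : Nat.Coprime p₁ p₂ := (Nat.coprime_primes hp₁ hp₂).mpr hne
  obtain ⟨U, hU1, hUp, hUd⟩ := exists_U' p₁ p₂ s hp₁ hp₂ hne
  obtain ⟨V, hV1, hVq, hVd⟩ := exists_U' p₂ p₁ s hp₂ hp₁ hne.symm
  have hdvd : p₁ * p₂ ∣ s + p₂ * U + p₁ * V := by
    apply Nat.Coprime.mul_dvd_of_dvd_of_dvd hco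
    · have h2 : s + p₂ * U + p₁ * V = (p₂ * U + s) + p₁ * V := by ring
      rw [h2]
      exact Nat.dvd_add hUd (dvd_mul_right p₁ V)
    · have h2 : s + p₂ * U + p₁ * V = (p₁ * V + s) + p₂ * U := by ring
      rw [h2]
      exact Nat.dvd_add hVd (dvd_mul_right p₂ U)
  obtain ⟨M, hMeq⟩ := hdvd
  have hM : M * (p₁ * p₂) = s + p₂ * U + p₁ * V := by rw [hMeq]; ring
  have hWM := W_count' p₁ p₂ U V M s hp₁.pos hp₂.pos hco hU1 hUp hV1 hVq hUd hVd hM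
  have hS1 := Faux_main hp₁ hp₂ hne s U hU1 hUp hUd
  have hS2 := Faux_main hp₂ hp₁ hne.symm s V hV1 hVq hVd
  unfold Faux at hS1 hS2
  rw [hS1, hS2]
  have hWc : (W s [p₁, p₂] : ℂ) + 1 = M := by exact_mod_cast hWM
  have hMc : (M : ℂ) * ((p₁ : ℂ) * p₂) = (s : ℂ) + (p₂ : ℂ) * U + (p₁ : ℂ) * V := by
    exact_mod_cast hM
  have hp1z : (p₁ : ℂ) ≠ 0 := Nat.cast_ne_zero.mpr hp₁.pos.ne'
  have hp2z : (p₂ : ℂ) ≠ 0 := Nat.cast_ne_zero.mpr hp₂.pos.ne'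
  have hPi : (p₁ : ℂ) * (p₁ : ℂ)⁻¹ = 1 := mul_inv_cancel₀ hp1z
  have hQi : (p₂ : ℂ) * (p₂ : ℂ)⁻¹ = 1 := mul_inv_cancel₀ hp2z
  linear_combination hWc + (p₁ : ℂ)⁻¹*(p₂ : ℂ)⁻¹*hMc
    + ((p₂ : ℂ)⁻¹*V - (M : ℂ)*(p₂ : ℂ)*(p₂ : ℂ)⁻¹ + (1 - (p₂ : ℂ)⁻¹)/2) * hPi
    + ((p₁ : ℂ)⁻¹*U - (M : ℂ) + (1 - (p₁ : ℂ)⁻¹)/2) * hQi
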